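/- Set α^t := diag(ϖ^{−t}, ϖ^t) for t ∈ ℤ and K^η := ηKη^{−1} where η := diag(1,ϖ). Then {α^t : t ∈ ℤ_{≥0}} is a complete and irredundant set of double coset representatives for each of the three double coset spaces K\G/K, K\G/K^η, and K^η\G/K^η; that is, in each case G is the disjoint union over t ≥ 0 of the corresponding double cosets of α^t, and these double cosets are pairwise distinct. -/

import Mathlib

open Matrix
open scoped Pointwise

noncomputable section

/-- Ambient data for the paper: `E` is the unramified quadratic extension `F(√ε)` of a
nonarchimedean local field `F` of odd residual characteristic.  The field `F` is realized
as the fixed field of the nontrivial `F`-automorphism `σ` of `E`; `ν` is the discrete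
valuation of `E` (extending the valuation of `F` normalized by `ν ϖ = 1` at a uniformizer
`ϖ` of `F`, and still surjecting onto `ℤ` since `E/F` is unramified); `q` is the (odd)
cardinality of the residue field of `F` (so `q²` is that of `E`); `ε ∈ O_F^×` is a
non-square unit and `sqε = √ε` generates `E` over `F`.  The standard facts about the
norm map and squares are included as fields. -/
structure Setting (E : Type*) [Field E] where
  /-- the nontrivial `F`-automorphism of `E`, written `x̄ = σ x` -/
  σ : E →+* E
  σσ : ∀ x, σ (σ x) = x
  σ_ne_id : σ ≠ RingHom.id E
  /-- the valuation (only its values at nonzero elements matter) -/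
  ν : E → ℤ
  ν_mul : ∀ {x y : E}, x ≠ 0 → y ≠ 0 → ν (x * y) = ν x + ν y
  ν_add : ∀ {x y : E}, x ≠ 0 → y ≠ 0 → x + y ≠ 0 → min (ν x) (ν y) ≤ ν (x + y)
  ν_σ : ∀ x, ν (σ x) = ν x
  ν_surj : ∀ n : ℤ, ∃ x : E, x ≠ 0 ∧ ν x = n
  /-- a uniformizer of `F` -/
  ϖ : E
  ϖ_ne_zero : ϖ ≠ 0
  ϖ_fixed : σ ϖ = ϖ
  ν_ϖ : ν ϖ = 1
  /-- the residual cardinality of `F` -/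
  q : ℕ
  q_odd : Odd q
  one_lt_q : 1 < q
  /-- a non-square unit of `O_F` -/
  ε : E
  ε_fixed : σ ε = ε
  ε_ne_zero : ε ≠ 0
  ν_ε : ν ε = 0
  ε_nonsquare : ¬ ∃ f : E, σ f = f ∧ f * f = ε
  /-- a square root `√ε ∈ E` of `ε` -/
  sqε : E
  sqε_sq : sqε * sqε = ε
  sqε_conj : σ sqε = -sqε
  /-- `E = F(√ε)` -/
  generates : ∀ x : E, ∃ a b : E, σ a = a ∧ σ b = b ∧ x = a + b * sqε
  /-- the norm maps `O_E^×` onto `O_F^×` -/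
  norm_surj_units : ∀ y : E, σ y = y → y ≠ 0 → ν y = 0 →
    ∃ x : E, x ≠ 0 ∧ ν x = 0 ∧ x * σ x = y
  /-- the norm maps `1 + p_E^d` onto `1 + p_F^d` for every `d ≥ 1` -/
  norm_surj_one_add : ∀ d : ℤ, 1 ≤ d → ∀ y : E, σ y = y → (y - 1 = 0 ∨ d ≤ ν (y - 1)) →
    ∃ x : E, (x - 1 = 0 ∨ d ≤ ν (x - 1)) ∧ x * σ x = y
  /-- the residue field of `F` has `q` elements -/
  residue_F : ∃ R : Finset E, R.card = q ∧ (∀ r ∈ R, σ r = r ∧ (r = 0 ∨ 0 ≤ ν r)) ∧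
    ∀ x : E, σ x = x → (x = 0 ∨ 0 ≤ ν x) →
      ∃! r, r ∈ R ∧ (x - r = 0 ∨ 1 ≤ ν (x - r))
  /-- the residue field of `E` has `q²` elements -/
  residue_E : ∃ R : Finset E, R.card = q ^ 2 ∧ (∀ r ∈ R, r = 0 ∨ 0 ≤ ν r) ∧
    ∀ x : E, (x = 0 ∨ 0 ≤ ν x) →
      ∃! r, r ∈ R ∧ (x - r = 0 ∨ 1 ≤ ν (x - r))
  /-- Hensel: a unit of `O_E` that is a square modulo `p_E` is a square (residue char. odd) -/
  hensel_sq : ∀ u w : E, u ≠ 0 → ν u = 0 → w ≠ 0 → ν w = 0 →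
    (w * w - u = 0 ∨ 1 ≤ ν (w * w - u)) → ∃ v : E, v * v = u

namespace Setting

variable {E : Type*} [Field E] (S : Setting E)

/-- `x` lies in the ring of integers `O_E`. -/
def inOE (x : E) : Prop := x = 0 ∨ 0 ≤ S.ν x

/-- `x` lies in the (fractional, if `d ≤ 0`) ideal `p_E^d`. -/
def inpE (d : ℤ) (x : E) : Prop := x = 0 ∨ d ≤ S.ν x

/-- `x` is a unit of `O_E`. -/
def unitOE (x : E) : Prop := x ≠ 0 ∧ S.ν x = 0

/-- `x` lies in the subfield `F` (the fixed field of `σ`). -/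
def inF (x : E) : Prop := S.σ x = x

/-- `x` is a unit of `O_F`. -/
def unitOF (x : E) : Prop := S.σ x = x ∧ x ≠ 0 ∧ S.ν x = 0

/-- `x` lies in `E¹`, i.e. has norm one. -/
def normOne (x : E) : Prop := x * S.σ x = 1

/-- `x ∈ √ε·F`. -/
def inSqεF (x : E) : Prop := ∃ f : E, S.σ f = f ∧ x = S.sqε * f

/-- Entrywise application of `σ` to a matrix, `ḡ`. -/
def mbar (g : Matrix (Fin 2) (Fin 2) E) : Matrix (Fin 2) (Fin 2) E :=
  Matrix.of fun i j => S.σ (g i j)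

/-- The antidiagonal matrix `w = [[0,1],[1,0]]` defining the hermitian form. -/
def wmat (_S : Setting E) : Matrix (Fin 2) (Fin 2) E := !![0, 1; 1, 0]

/-- Membership in `G = U(1,1)(F) = {g : ḡᵀ·w·g = w}`. -/
def inG (g : Matrix (Fin 2) (Fin 2) E) : Prop :=
  (S.mbar g)ᵀ * S.wmat * g = S.wmat

/-- `G = U(1,1)(F)`, as a set of 2×2 matrices over `E`. -/
def Gset : Set (Matrix (Fin 2) (Fin 2) E) := {g | S.inG g}

/-- `G_der = SU(1,1)(F) = {g ∈ G : det g = 1}`. -/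
def Gder : Set (Matrix (Fin 2) (Fin 2) E) := {g | S.inG g ∧ g.det = 1}

/-- The standard maximal compact subgroup `K` of `G` (entries in `O_E`). -/
def Kset : Set (Matrix (Fin 2) (Fin 2) E) := {g | S.inG g ∧ ∀ i j, S.inOE (g i j)}

/-- The congruence subgroup `K_d = {k ∈ K : k − 1 ∈ p_E^d·M₂(O_E)}`. -/
def Kfil (d : ℤ) : Set (Matrix (Fin 2) (Fin 2) E) :=
  {g | g ∈ S.Kset ∧ ∀ i j, S.inpE d ((g - 1) i j)}

/-- The subgroup `B` of upper triangular matrices in `K`. -/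
def Bset : Set (Matrix (Fin 2) (Fin 2) E) := {g | g ∈ S.Kset ∧ g 1 0 = 0}

/-- The subgroup `B^op` of lower triangular matrices in `K`. -/
def Bop : Set (Matrix (Fin 2) (Fin 2) E) := {g | g ∈ S.Kset ∧ g 0 1 = 0}

/-- The center `Z = {z·I : z ∈ E¹}` of `G`. -/
def Zset : Set (Matrix (Fin 2) (Fin 2) E) :=
  {g | ∃ z : E, S.normOne z ∧ g = z • (1 : Matrix (Fin 2) (Fin 2) E)}

/-- The matrix `α^t = diag(ϖ^{−t}, ϖ^t)`. -/
def αmat (t : ℕ) : Matrix (Fin 2) (Fin 2) E := !![(S.ϖ ^ t)⁻¹, 0; 0, S.ϖ ^ t]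

/-- The matrix `η = diag(1, ϖ)` (it normalizes `G`). -/
def ηmat : Matrix (Fin 2) (Fin 2) E := !![1, 0; 0, S.ϖ]

/-- The matrix `η⁻¹ = diag(1, ϖ⁻¹)`. -/
def ηinv : Matrix (Fin 2) (Fin 2) E := !![1, 0; 0, S.ϖ⁻¹]

/-- The torus `T_{γ₁,γ₂} = {[[a,bγ₁],[bγ₂,a]] : a·ā + b·b̄·γ₁γ₂ = 1, ā·b ∈ √ε·F}`. -/
def Tset (γ₁ γ₂ : E) : Set (Matrix (Fin 2) (Fin 2) E) :=
  {g | ∃ a b : E, g = !![a, b * γ₁; b * γ₂, a] ∧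
    a * S.σ a + b * S.σ b * (γ₁ * γ₂) = 1 ∧ S.inSqεF (S.σ a * b)}

/-- The Moy–Prasad filtration subgroup `G_{y,r}` of `G` (for `r > 0`). -/
def Gfil (y r : ℚ) : Set (Matrix (Fin 2) (Fin 2) E) :=
  {g | S.inG g ∧ S.inpE ⌈r⌉ (g 0 0 - 1) ∧ S.inpE ⌈r⌉ (g 1 1 - 1) ∧
    S.inpE ⌈r - y⌉ (g 0 1) ∧ S.inpE ⌈r + y⌉ (g 1 0)}

/-- `G_{y,0+} = ⋃_{r>0} G_{y,r}`. -/
def Gfil0plus (y : ℚ) : Set (Matrix (Fin 2) (Fin 2) E) :=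
  {g | ∃ r : ℚ, 0 < r ∧ g ∈ S.Gfil y r}

end Setting


set_option linter.unusedSectionVars false

namespace Setting

variable {E : Type*} [Field E] (S : Setting E)

lemma σ_ne_zero {x : E} (hx : x ≠ 0) : S.σ x ≠ 0 := by
  intro h
  have := congrArg S.σ h
  rw [S.σσ, map_zero] at this
  exact hx this

lemma σ_inv (x : E) : S.σ x⁻¹ = (S.σ x)⁻¹ := map_inv₀ _ _

lemma ν_one : S.ν 1 = 0 := by
  have := S.ν_mul (x := 1) (y := 1) one_ne_zero one_ne_zero
  simp at this; omega

lemma ν_inv {x : E} (hx : x ≠ 0) : S.ν x⁻¹ = - S.ν x := by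
  have := S.ν_mul hx (inv_ne_zero hx)
  rw [mul_inv_cancel₀ hx, S.ν_one] at this
  omega

lemma ϖ_pow_ne (n : ℕ) : S.ϖ ^ n ≠ 0 := pow_ne_zero _ S.ϖ_ne_zero

lemma ν_ϖ_pow (n : ℕ) : S.ν (S.ϖ ^ n) = n := by
  induction n with
  | zero => simpa using S.ν_one
  | succ k ih =>
    rw [pow_succ, S.ν_mul (S.ϖ_pow_ne k) S.ϖ_ne_zero, ih, S.ν_ϖ]
    push_cast; ring

lemma σ_ϖ_pow (n : ℕ) : S.σ (S.ϖ ^ n) = S.ϖ ^ n := by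
  rw [map_pow, S.ϖ_fixed]

lemma inpE_zero (d : ℤ) : S.inpE d 0 := Or.inl rfl

lemma inpE_mono {d' d : ℤ} (h : d' ≤ d) {x : E} : S.inpE d x → S.inpE d' x := by
  rintro (rfl | hx); exacts [Or.inl rfl, Or.inr (le_trans h hx)]

lemma inpE_add {d : ℤ} {x y : E} (hx : S.inpE d x) (hy : S.inpE d y) :
    S.inpE d (x + y) := by
  by_cases h0 : x = 0
  · simpa [h0] using hy
  by_cases h1 : y = 0
  · simpa [h1] using hx
  rcases hx with rfl | hx
  · exact absurd rfl h0
  rcases hy with rfl | hy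
  · exact absurd rfl h1
  by_cases hxy : x + y = 0
  · exact Or.inl hxy
  · refine Or.inr ?_
    have := S.ν_add h0 h1 hxy
    omega

lemma inpE_mul {d₁ d₂ : ℤ} {x y : E} (hx : S.inpE d₁ x) (hy : S.inpE d₂ y) :
    S.inpE (d₁ + d₂) (x * y) := by
  rcases hx with rfl | hx
  · simp [inpE_zero]
  rcases hy with rfl | hy
  · simp [inpE_zero]
  by_cases h0 : x = 0
  · simp [h0, inpE_zero]
  by_cases h1 : y = 0
  · simp [h1, inpE_zero]
  refine Or.inr ?_
  rw [S.ν_mul h0 h1]; omega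

lemma inpE_σ {d : ℤ} {x : E} (hx : S.inpE d x) : S.inpE d (S.σ x) := by
  rcases hx with rfl | hx
  · simp [inpE_zero]
  · exact Or.inr (by rw [S.ν_σ]; exact hx)

lemma inOE_iff {x : E} : S.inOE x ↔ S.inpE 0 x := Iff.rfl


lemma mbar2 (a b c d : E) : S.mbar !![a,b;c,d] = !![S.σ a, S.σ b; S.σ c, S.σ d] := by
  ext i j; fin_cases i <;> fin_cases j <;> rfl

lemma mbar_mul (A B : Matrix (Fin 2) (Fin 2) E) :
    S.mbar (A * B) = S.mbar A * S.mbar B := by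
  show (A * B).map S.σ = A.map S.σ * B.map S.σ
  exact Matrix.map_mul

lemma mbar_one : S.mbar (1 : Matrix (Fin 2) (Fin 2) E) = 1 := by
  show (1 : Matrix (Fin 2) (Fin 2) E).map S.σ = 1
  exact Matrix.map_one _ (map_zero _) (map_one _)

/-- The four scalar equations saying `ḡᵀ w g = P • w` for `g = !![a,b;c,d]`. -/
def Rel (P a b c d : E) : Prop :=
  S.σ c * a + S.σ a * c = 0 ∧ S.σ c * b + S.σ a * d = P ∧
  S.σ d * a + S.σ b * c = P ∧ S.σ d * b + S.σ b * d = 0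

lemma trans2 (a b c d : E) : (!![a,b;c,d])ᵀ = !![a,c;b,d] := by
  ext i j; fin_cases i <;> fin_cases j <;> rfl

lemma smul2 (x a b c d : E) : x • (!![a,b;c,d]) = !![x*a,x*b;x*c,x*d] := by
  ext i j; fin_cases i <;> fin_cases j <;> simp

lemma eq2 {a b c d a' b' c' d' : E} :
    (!![a,b;c,d] : Matrix (Fin 2) (Fin 2) E) = !![a',b';c',d'] ↔
      a = a' ∧ b = b' ∧ c = c' ∧ d = d' := by
  rw [← Matrix.ext_iff]
  constructor
  · intro h; exact ⟨h 0 0, h 0 1, h 1 0, h 1 1⟩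
  · rintro ⟨h1, h2, h3, h4⟩ i j; fin_cases i <;> fin_cases j <;> assumption

lemma relM_iff (P a b c d : E) :
    (S.mbar !![a,b;c,d])ᵀ * S.wmat * !![a,b;c,d] = P • S.wmat ↔ S.Rel P a b c d := by
  rw [S.mbar2, trans2, wmat, Matrix.mul_fin_two, Matrix.mul_fin_two, smul2, eq2, Rel]
  constructor <;> rintro ⟨h1, h2, h3, h4⟩ <;>
    exact ⟨by linear_combination h1, by linear_combination h2,
      by linear_combination h3, by linear_combination h4⟩

lemma inG_iff (a b c d : E) : S.inG !![a,b;c,d] ↔ S.Rel 1 a b c d := by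
  rw [inG, ← S.relM_iff, one_smul]

lemma mem_K_iff (a b c d : E) : !![a,b;c,d] ∈ S.Kset ↔
    S.Rel 1 a b c d ∧ S.inOE a ∧ S.inOE b ∧ S.inOE c ∧ S.inOE d := by
  rw [Kset, Set.mem_setOf_eq, inG_iff]
  refine and_congr_right fun _ => ?_
  simp only [Fin.forall_fin_two, Matrix.cons_val_zero, Matrix.cons_val_one,
    Matrix.head_cons, Matrix.head_fin_const]
  tauto


lemma inOE_zero : S.inOE (0:E) := Or.inl rfl
lemma inOE_one : S.inOE (1:E) := Or.inr (by rw [S.ν_one])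

lemma entries_mul {m₁ m₂ : ℤ} {A B : Matrix (Fin 2) (Fin 2) E}
    (hA : ∀ i j, S.inpE m₁ (A i j)) (hB : ∀ i j, S.inpE m₂ (B i j)) :
    ∀ i j, S.inpE (m₁ + m₂) ((A * B) i j) := by
  intro i j; rw [Matrix.mul_apply, Fin.sum_univ_two]
  exact S.inpE_add (S.inpE_mul (hA i 0) (hB 0 j)) (S.inpE_mul (hA i 1) (hB 1 j))

lemma inG_mul {A B : Matrix (Fin 2) (Fin 2) E} (hA : S.inG A) (hB : S.inG B) :
    S.inG (A * B) := by
  show (S.mbar (A*B))ᵀ * S.wmat * (A * B) = S.wmat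
  rw [S.mbar_mul, Matrix.transpose_mul]
  rw [show (S.mbar B)ᵀ * (S.mbar A)ᵀ * S.wmat * (A * B)
      = (S.mbar B)ᵀ * ((S.mbar A)ᵀ * S.wmat * A) * B by simp only [mul_assoc], hA, hB]

lemma K_mul {A B : Matrix (Fin 2) (Fin 2) E} (hA : A ∈ S.Kset) (hB : B ∈ S.Kset) :
    A * B ∈ S.Kset := by
  refine ⟨S.inG_mul hA.1 hB.1, fun i j => ?_⟩
  have h := S.entries_mul hA.2 hB.2 i j; simp only [add_zero] at h; exact h

lemma w_entries : ∀ i j, S.inOE (S.wmat i j) := by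
  intro i j; fin_cases i <;> fin_cases j <;>
    first | exact S.inOE_zero | exact S.inOE_one

lemma w_mem : S.wmat ∈ S.Kset := by
  refine ⟨?_, S.w_entries⟩
  rw [wmat, inG_iff]
  refine ⟨by simp, by simp, by simp, by simp⟩

lemma wsq : S.wmat * S.wmat = 1 := by
  rw [wmat, Matrix.mul_fin_two, Matrix.one_fin_two]; norm_num

lemma K_inv {A : Matrix (Fin 2) (Fin 2) E} (hA : A ∈ S.Kset) :
    ∃ B ∈ S.Kset, A * B = 1 ∧ B * A = 1 := by
  set B := S.wmat * (S.mbar A)ᵀ * S.wmat with hB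
  have hBA : B * A = 1 := by
    rw [hB, show S.wmat * (S.mbar A)ᵀ * S.wmat * A
        = S.wmat * ((S.mbar A)ᵀ * S.wmat * A) by simp only [mul_assoc], hA.1, S.wsq]
  have hAB : A * B = 1 := mul_eq_one_comm.mpr hBA
  have e1 : S.wmat * B = (S.mbar A)ᵀ * S.wmat := by
    calc S.wmat * B = ((S.mbar A)ᵀ * S.wmat * A) * B := by rw [hA.1]
    _ = (S.mbar A)ᵀ * S.wmat * (A * B) := by simp only [mul_assoc]
    _ = (S.mbar A)ᵀ * S.wmat := by rw [hAB, mul_one]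
  have hGB : S.inG B := by
    show (S.mbar B)ᵀ * S.wmat * B = S.wmat
    calc (S.mbar B)ᵀ * S.wmat * B = (S.mbar B)ᵀ * (S.wmat * B) := by rw [mul_assoc]
    _ = (S.mbar B)ᵀ * ((S.mbar A)ᵀ * S.wmat) := by rw [e1]
    _ = (S.mbar A * S.mbar B)ᵀ * S.wmat := by
        rw [Matrix.transpose_mul]; simp only [mul_assoc]
    _ = (S.mbar (A * B))ᵀ * S.wmat := by rw [← S.mbar_mul]
    _ = S.wmat := by rw [hAB, S.mbar_one, Matrix.transpose_one, one_mul]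
  have hent : ∀ i j, S.inOE (B i j) := by
    have h1 : ∀ i j, S.inpE 0 ((S.mbar A)ᵀ i j) := fun i j => S.inpE_σ (hA.2 j i)
    have := S.entries_mul (S.entries_mul S.w_entries h1) S.w_entries
    intro i j; have h := this i j; simp only [add_zero] at h; exact h
  exact ⟨B, ⟨hGB, hent⟩, hAB, hBA⟩


lemma core (P : E) (hP : P ≠ 0) (hσP : S.σ P = P)
    (a b c d : E) (hr : S.Rel P a b c d)
    (ha : a ≠ 0) (hνa : S.ν a ≤ 0)
    (hb : S.inpE (S.ν a) b) (hc : S.inpE (S.ν a) c) :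
    ∃ t : ℕ, ∃ k1 ∈ S.Kset, ∃ k2 ∈ S.Kset,
      !![a,b;c,d] = k1 * !![(S.ϖ^t)⁻¹, 0; 0, S.ϖ^t * P] * k2 := by
  obtain ⟨h1, h2, h3, h4⟩ := hr
  have hσa : S.σ a ≠ 0 := S.σ_ne_zero ha
  set t : ℕ := (-S.ν a).toNat with ht'
  have ht : (t:ℤ) = -S.ν a := Int.toNat_of_nonneg (by omega)
  have hϖt : S.ϖ^t ≠ 0 := S.ϖ_pow_ne t
  have hu : S.ϖ^t * a ≠ 0 := mul_ne_zero hϖt ha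
  have hσu : S.σ (S.ϖ^t * a) ≠ 0 := S.σ_ne_zero hu
  have hPW : P * (b * S.σ a + a * S.σ b) = 0 := by
    linear_combination (-(S.σ a * b)) * h3 - (a * S.σ b) * h2
      + (S.σ a * a) * h4 + (S.σ b * b) * h1
  have hW : b * S.σ a + a * S.σ b = 0 := by
    rcases mul_eq_zero.mp hPW with h | h
    · exact absurd h hP
    · exact h
  have hd : d * S.σ a + b * S.σ c = P := by
    have := congrArg S.σ h3
    simpa only [_root_.map_add, _root_.map_mul, S.σσ, hσP] using this
  refine ⟨t, !![1, 0; c * a⁻¹, 1], ?_, !![S.ϖ^t * a, S.ϖ^t * b; 0, (S.σ (S.ϖ^t * a))⁻¹], ?_, ?_⟩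
  · rw [S.mem_K_iff]
    refine ⟨⟨?_, ?_, ?_, ?_⟩, S.inOE_one, S.inOE_zero, ?_, S.inOE_one⟩
    · rw [_root_.map_mul, S.σ_inv, _root_.map_one]
      field_simp
      linear_combination h1
    · simp
    · simp
    · simp
    · by_cases h0 : c = 0
      · exact Or.inl (by rw [h0, zero_mul])
      · refine Or.inr ?_
        rw [S.ν_mul h0 (inv_ne_zero ha), S.ν_inv ha]
        rcases hc with h | h
        · exact absurd h h0
        · omega
  · rw [S.mem_K_iff]
    refine ⟨⟨?_, ?_, ?_, ?_⟩, ?_, ?_, S.inOE_zero, ?_⟩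
    · simp
    · simp only [_root_.map_zero, _root_.map_mul, map_pow, S.ϖ_fixed]
      field_simp
      ring
    · simp only [S.σ_inv, S.σσ]
      field_simp
      ring
    · simp only [S.σ_inv, S.σσ, _root_.map_mul, map_pow, S.ϖ_fixed]
      field_simp
      linear_combination hW
    · refine Or.inr ?_
      rw [S.ν_mul hϖt ha, S.ν_ϖ_pow]; omega
    · by_cases h0 : b = 0
      · exact Or.inl (by rw [h0, mul_zero])
      · refine Or.inr ?_
        rw [S.ν_mul hϖt h0, S.ν_ϖ_pow]
        rcases hb with h | h
        · exact absurd h h0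
        · omega
    · refine Or.inr ?_
      rw [S.ν_inv hσu, S.ν_σ, S.ν_mul hϖt ha, S.ν_ϖ_pow]; omega
  · rw [Matrix.mul_fin_two, Matrix.mul_fin_two, eq2]
    simp only [_root_.map_mul, map_pow, S.ϖ_fixed]
    refine ⟨by field_simp; ring, by field_simp; ring, by field_simp; ring, ?_⟩
    field_simp
    linear_combination (S.ϖ^t * a) * hd - (S.ϖ^t * b) * h1


lemma pivot (P a b c d : E) (hP : P ≠ 0) (hνP : S.ν P ≤ 1) (hr : S.Rel P a b c d) :
    ∃ p : E, p ≠ 0 ∧ S.ν p ≤ 0 ∧ S.inpE (S.ν p) a ∧ S.inpE (S.ν p) b ∧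
      S.inpE (S.ν p) c ∧ S.inpE (S.ν p) d ∧ (p = a ∨ p = b ∨ p = c ∨ p = d) := by
  classical
  have hac : a ≠ 0 ∨ c ≠ 0 := by
    by_contra h
    push_neg at h
    have h2 := hr.2.1
    rw [h.1, h.2, map_zero, zero_mul, zero_mul, add_zero] at h2
    exact hP h2.symm
  set T : Finset ℤ := (({a,b,c,d} : Finset E).filter (· ≠ 0)).image S.ν with hT
  have hTne : T.Nonempty := by
    rcases hac with h | h
    · exact ⟨S.ν a, Finset.mem_image_of_mem _ (Finset.mem_filter.mpr ⟨by simp, h⟩)⟩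
    · exact ⟨S.ν c, Finset.mem_image_of_mem _ (Finset.mem_filter.mpr ⟨by simp, h⟩)⟩
  obtain ⟨p, hpmem, hpν⟩ := Finset.mem_image.mp (T.min'_mem hTne)
  have hp0 : p ≠ 0 := (Finset.mem_filter.mp hpmem).2
  have hple : ∀ x : E, x ∈ ({a,b,c,d} : Finset E) → S.inpE (S.ν p) x := by
    intro x hx
    by_cases h0 : x = 0
    · exact Or.inl h0
    · refine Or.inr ?_
      rw [hpν]
      exact T.min'_le _ (Finset.mem_image_of_mem _ (Finset.mem_filter.mpr ⟨hx, h0⟩))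
  have hpa := hple a (by simp)
  have hpb := hple b (by simp)
  have hpc := hple c (by simp)
  have hpd := hple d (by simp)
  have hν0 : S.ν p ≤ 0 := by
    by_contra hgt
    push_neg at hgt
    have h1le : (1:ℤ) ≤ S.ν p := hgt
    have hcb : S.inpE 2 (S.σ c * b) := by
      have := S.inpE_mul (S.inpE_σ (S.inpE_mono h1le hpc)) (S.inpE_mono h1le hpb)
      simpa using this
    have had : S.inpE 2 (S.σ a * d) := by
      have := S.inpE_mul (S.inpE_σ (S.inpE_mono h1le hpa)) (S.inpE_mono h1le hpd)
      simpa using this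
    have hsum : S.inpE 2 P := by
      rw [← hr.2.1]
      exact S.inpE_add hcb had
    rcases hsum with h | h
    · exact hP h
    · omega
  have hPmem : p = a ∨ p = b ∨ p = c ∨ p = d := by
    simpa using (Finset.mem_filter.mp hpmem).1
  exact ⟨p, hp0, hν0, hpa, hpb, hpc, hpd, hPmem⟩

lemma master (P : E) (hP : P ≠ 0) (hσP : S.σ P = P) (hνP : S.ν P ≤ 1)
    (h : Matrix (Fin 2) (Fin 2) E)
    (hrel : (S.mbar h)ᵀ * S.wmat * h = P • S.wmat) :
    ∃ t : ℕ, ∃ k1 ∈ S.Kset, ∃ k2 ∈ S.Kset,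
      h = k1 * !![(S.ϖ^t)⁻¹, 0; 0, S.ϖ^t * P] * k2 := by
  obtain ⟨a, b, c, d, rfl⟩ : ∃ a b c d, h = !![a,b;c,d] :=
    ⟨_, _, _, _, Matrix.eta_fin_two h⟩
  rw [S.relM_iff] at hrel
  obtain ⟨p, hp0, hpν, hpa, hpb, hpc, hpd, hcase⟩ := S.pivot P a b c d hP hνP hrel
  obtain ⟨h1, h2, h3, h4⟩ := hrel
  rcases hcase with rfl | rfl | rfl | rfl
  · exact S.core P hP hσP p b c d ⟨h1, h2, h3, h4⟩ hp0 hpν hpb hpc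
  · -- p = b
    obtain ⟨t, k1, hk1, k2, hk2, heq⟩ := S.core P hP hσP p a d c
      ⟨by linear_combination h4, by linear_combination h3,
       by linear_combination h2, by linear_combination h1⟩ hp0 hpν hpa hpd
    refine ⟨t, k1, hk1, k2 * S.wmat, S.K_mul hk2 S.w_mem, ?_⟩
    have hswap : (!![a,p;c,d] : Matrix (Fin 2) (Fin 2) E) = !![p,a;d,c] * S.wmat := by
      rw [wmat, Matrix.mul_fin_two, eq2]; norm_num
    rw [hswap, heq, mul_assoc]
  · -- p = c
    obtain ⟨t, k1, hk1, k2, hk2, heq⟩ := S.core P hP hσP p d a b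
      ⟨by linear_combination h1, by linear_combination h2,
       by linear_combination h3, by linear_combination h4⟩ hp0 hpν hpd hpa
    refine ⟨t, S.wmat * k1, S.K_mul S.w_mem hk1, k2, hk2, ?_⟩
    have hswap : (!![a,b;p,d] : Matrix (Fin 2) (Fin 2) E) = S.wmat * !![p,d;a,b] := by
      rw [wmat, Matrix.mul_fin_two, eq2]; norm_num
    rw [hswap, heq]
    simp only [mul_assoc]
  · -- p = d
    obtain ⟨t, k1, hk1, k2, hk2, heq⟩ := S.core P hP hσP p c b a
      ⟨by linear_combination h4, by linear_combination h3,
       by linear_combination h2, by linear_combination h1⟩ hp0 hpν hpc hpb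
    refine ⟨t, S.wmat * k1, S.K_mul S.w_mem hk1, k2 * S.wmat, S.K_mul hk2 S.w_mem, ?_⟩
    have hswap : (!![a,b;c,p] : Matrix (Fin 2) (Fin 2) E)
        = S.wmat * !![p,c;b,a] * S.wmat := by
      rw [wmat, Matrix.mul_fin_two, Matrix.mul_fin_two, eq2]; norm_num
    rw [hswap, heq]
    simp only [mul_assoc]



lemma OE_to_pE {A : Matrix (Fin 2) (Fin 2) E} (h : ∀ i j, S.inOE (A i j)) :
    ∀ i j, S.inpE 0 (A i j) := fun i j => h i j

lemma Dmat_entries (t : ℕ) (P : E) (hνP : 0 ≤ S.ν P) :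
    ∀ i j, S.inpE (-(t:ℤ))
      ((!![(S.ϖ^t)⁻¹, 0; 0, S.ϖ^t * P] : Matrix (Fin 2) (Fin 2) E) i j) := by
  have h00 : S.inpE (-(t:ℤ)) ((S.ϖ^t)⁻¹ : E) :=
    Or.inr (by rw [S.ν_inv (S.ϖ_pow_ne t), S.ν_ϖ_pow])
  have h11 : S.inpE (-(t:ℤ)) (S.ϖ^t * P) := by
    by_cases hP : P = 0
    · exact Or.inl (by rw [hP, mul_zero])
    · exact Or.inr (by rw [S.ν_mul (S.ϖ_pow_ne t) hP, S.ν_ϖ_pow]; omega)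
  intro i j; fin_cases i <;> fin_cases j
  · exact h00
  · exact S.inpE_zero _
  · exact S.inpE_zero _
  · exact h11

lemma disj_core (P : E) (hνP : 0 ≤ S.ν P) {s t : ℕ} (hst : s < t)
    {k1 k2 k3 k4 : Matrix (Fin 2) (Fin 2) E} (hk1 : k1 ∈ S.Kset) (hk2 : k2 ∈ S.Kset)
    (hk3 : k3 ∈ S.Kset) (hk4 : k4 ∈ S.Kset)
    (heq : k1 * !![(S.ϖ^s)⁻¹, 0; 0, S.ϖ^s * P] * k2
         = k3 * !![(S.ϖ^t)⁻¹, 0; 0, S.ϖ^t * P] * k4) : False := by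
  obtain ⟨k3', hk3', h33', h3'3⟩ := S.K_inv hk3
  obtain ⟨k4', hk4', h44', h4'4⟩ := S.K_inv hk4
  have hDt : (!![(S.ϖ^t)⁻¹, 0; 0, S.ϖ^t * P] : Matrix (Fin 2) (Fin 2) E)
      = k3' * (k1 * !![(S.ϖ^s)⁻¹, 0; 0, S.ϖ^s * P] * k2) * k4' := by
    rw [heq]
    rw [show k3' * (k3 * !![(S.ϖ^t)⁻¹, 0; 0, S.ϖ^t * P] * k4) * k4'
        = (k3' * k3) * !![(S.ϖ^t)⁻¹, 0; 0, S.ϖ^t * P] * (k4 * k4') by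
      simp only [mul_assoc], h3'3, h44', one_mul, mul_one]
  have e1 : ∀ i j, S.inpE (-(s:ℤ))
      ((k1 * !![(S.ϖ^s)⁻¹, 0; 0, S.ϖ^s * P] * k2) i j) := by
    intro i j
    have := S.entries_mul (S.entries_mul (S.OE_to_pE hk1.2)
      (S.Dmat_entries s P hνP)) (S.OE_to_pE hk2.2) i j
    simpa using this
  have e2 := S.entries_mul (S.entries_mul (S.OE_to_pE hk3'.2) e1) (S.OE_to_pE hk4'.2)
  have h00 : S.inpE (-(s:ℤ)) ((S.ϖ^t)⁻¹ : E) := by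
    have h := e2 0 0
    rw [← hDt] at h
    simpa using h
  rcases h00 with h | h
  · exact S.ϖ_pow_ne t (inv_eq_zero.mp h)
  · rw [S.ν_inv (S.ϖ_pow_ne t), S.ν_ϖ_pow] at h; omega

lemma inG_α (t : ℕ) : S.inG (S.αmat t) := by
  rw [αmat, S.inG_iff]
  refine ⟨by simp, ?_, ?_, by simp⟩
  · simp only [_root_.map_zero, zero_mul, zero_add, mul_zero, S.σ_inv, map_pow, S.ϖ_fixed]
    exact inv_mul_cancel₀ (S.ϖ_pow_ne t)
  · simp only [_root_.map_zero, zero_mul, add_zero, mul_zero, map_pow, S.ϖ_fixed]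
    exact mul_inv_cancel₀ (S.ϖ_pow_ne t)

lemma η_ηinv : S.ηmat * S.ηinv = 1 := by
  rw [ηmat, ηinv, Matrix.mul_fin_two, Matrix.one_fin_two, eq2]
  refine ⟨by ring, by ring, by ring, ?_⟩
  rw [zero_mul, zero_add, mul_inv_cancel₀ S.ϖ_ne_zero]

lemma ηinv_η : S.ηinv * S.ηmat = 1 := by
  rw [ηmat, ηinv, Matrix.mul_fin_two, Matrix.one_fin_two, eq2]
  refine ⟨by ring, by ring, by ring, ?_⟩
  rw [zero_mul, zero_add, inv_mul_cancel₀ S.ϖ_ne_zero]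

lemma ηinv_α_η (t : ℕ) : S.ηinv * S.αmat t * S.ηmat = S.αmat t := by
  rw [ηmat, ηinv, αmat, Matrix.mul_fin_two, Matrix.mul_fin_two, eq2]
  refine ⟨by ring, by ring, by ring, ?_⟩
  have hinv : S.ϖ⁻¹ * S.ϖ = 1 := inv_mul_cancel₀ S.ϖ_ne_zero
  linear_combination (S.ϖ^t) * hinv

lemma mbar_η : S.mbar S.ηmat = S.ηmat := by
  rw [ηmat, S.mbar2, eq2]
  exact ⟨_root_.map_one _, _root_.map_zero _, _root_.map_zero _, S.ϖ_fixed⟩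

lemma η_transpose : S.ηmatᵀ = S.ηmat := by rw [ηmat, trans2]

lemma η_w_η : S.ηmat * S.wmat * S.ηmat = S.ϖ • S.wmat := by
  rw [ηmat, wmat, Matrix.mul_fin_two, Matrix.mul_fin_two, smul2, eq2]
  refine ⟨by ring, by ring, by ring, by ring⟩

lemma relη {g : Matrix (Fin 2) (Fin 2) E} (hg : S.inG g) :
    (S.mbar (g * S.ηmat))ᵀ * S.wmat * (g * S.ηmat) = S.ϖ • S.wmat := by
  rw [S.mbar_mul, Matrix.transpose_mul, S.mbar_η, S.η_transpose]
  rw [show S.ηmat * (S.mbar g)ᵀ * S.wmat * (g * S.ηmat)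
      = S.ηmat * ((S.mbar g)ᵀ * S.wmat * g) * S.ηmat by simp only [mul_assoc]]
  rw [hg, S.η_w_η]

lemma inG_conj_η {g : Matrix (Fin 2) (Fin 2) E} (hg : S.inG g) :
    S.inG (S.ηmat * g * S.ηinv) := by
  obtain ⟨a, b, c, d, rfl⟩ : ∃ a b c d, g = !![a,b;c,d] :=
    ⟨_, _, _, _, Matrix.eta_fin_two g⟩
  rw [S.inG_iff] at hg
  obtain ⟨h1, h2, h3, h4⟩ := hg
  have hϖ := S.ϖ_ne_zero
  have hcalc : S.ηmat * !![a,b;c,d] * S.ηinv = !![a, b * S.ϖ⁻¹; S.ϖ * c, d] := by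
    rw [ηmat, ηinv, Matrix.mul_fin_two, Matrix.mul_fin_two, eq2]
    refine ⟨by ring, by ring, by ring, by field_simp; ring⟩
  rw [hcalc, S.inG_iff]
  refine ⟨?_, ?_, ?_, ?_⟩ <;>
    simp only [_root_.map_mul, S.σ_inv, S.ϖ_fixed]
  · linear_combination S.ϖ * h1
  · field_simp
    linear_combination h2
  · field_simp
    linear_combination h3
  · field_simp
    linear_combination h4

lemma inG_conj_ηinv {g : Matrix (Fin 2) (Fin 2) E} (hg : S.inG g) :
    S.inG (S.ηinv * g * S.ηmat) := by
  obtain ⟨a, b, c, d, rfl⟩ : ∃ a b c d, g = !![a,b;c,d] :=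
    ⟨_, _, _, _, Matrix.eta_fin_two g⟩
  rw [S.inG_iff] at hg
  obtain ⟨h1, h2, h3, h4⟩ := hg
  have hϖ := S.ϖ_ne_zero
  have hcalc : S.ηinv * !![a,b;c,d] * S.ηmat = !![a, b * S.ϖ; S.ϖ⁻¹ * c, d] := by
    rw [ηmat, ηinv, Matrix.mul_fin_two, Matrix.mul_fin_two, eq2]
    refine ⟨by ring, by ring, by ring, by field_simp; ring⟩
  have hinv : S.ϖ⁻¹ * S.ϖ = 1 := inv_mul_cancel₀ S.ϖ_ne_zero
  rw [hcalc, S.inG_iff]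
  refine ⟨?_, ?_, ?_, ?_⟩ <;>
    simp only [_root_.map_mul, S.σ_inv, S.ϖ_fixed]
  · linear_combination S.ϖ⁻¹ * h1
  · linear_combination h2 + (S.σ c * b) * hinv
  · linear_combination h3 + (S.σ b * c) * hinv
  · linear_combination S.ϖ * h4

lemma mem_coset {A B : Set (Matrix (Fin 2) (Fin 2) E)} {m z : Matrix (Fin 2) (Fin 2) E} :
    z ∈ A * {m} * B ↔ ∃ k1 ∈ A, ∃ k2 ∈ B, k1 * m * k2 = z := by
  constructor
  · rintro ⟨x, ⟨k1, hk1, w, hw, rfl⟩, y, hy, rfl⟩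
    rw [Set.mem_singleton_iff] at hw; subst hw
    exact ⟨k1, hk1, y, hy, rfl⟩
  · rintro ⟨k1, hk1, k2, hk2, rfl⟩
    exact ⟨k1 * m, ⟨k1, hk1, m, rfl, rfl⟩, k2, hk2, rfl⟩

lemma coset2_eq (k1 k2 : Matrix (Fin 2) (Fin 2) E) (t : ℕ) :
    k1 * S.αmat t * (S.ηmat * k2 * S.ηinv) * S.ηmat
      = k1 * (S.αmat t * S.ηmat) * k2 := by
  rw [show k1 * S.αmat t * (S.ηmat * k2 * S.ηinv) * S.ηmat
      = k1 * S.αmat t * S.ηmat * k2 * (S.ηinv * S.ηmat) by simp only [mul_assoc],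
    S.ηinv_η, mul_one]
  simp only [mul_assoc]

lemma conj_coset_eq (k1 k2 : Matrix (Fin 2) (Fin 2) E) (t : ℕ) :
    S.ηinv * ((S.ηmat * k1 * S.ηinv) * S.αmat t * (S.ηmat * k2 * S.ηinv)) * S.ηmat
      = k1 * S.αmat t * k2 := by
  rw [show S.ηinv * ((S.ηmat * k1 * S.ηinv) * S.αmat t * (S.ηmat * k2 * S.ηinv)) * S.ηmat
      = (S.ηinv * S.ηmat) * k1 * (S.ηinv * S.αmat t * S.ηmat) * k2 * (S.ηinv * S.ηmat) by
    simp only [mul_assoc], S.ηinv_η, S.ηinv_α_η, one_mul, mul_one]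

lemma conj_coset_eq' (k1 k2 : Matrix (Fin 2) (Fin 2) E) (t : ℕ) :
    (S.ηmat * k1 * S.ηinv) * S.αmat t * (S.ηmat * k2 * S.ηinv)
      = S.ηmat * (k1 * S.αmat t * k2) * S.ηinv := by
  rw [show (S.ηmat * k1 * S.ηinv) * S.αmat t * (S.ηmat * k2 * S.ηinv)
      = S.ηmat * k1 * (S.ηinv * S.αmat t * S.ηmat) * k2 * S.ηinv by simp only [mul_assoc],
    S.ηinv_α_η]
  simp only [mul_assoc]

lemma αmat_eq_D (t : ℕ) : S.αmat t = !![(S.ϖ^t)⁻¹, 0; 0, S.ϖ^t * 1] := by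
  rw [αmat, mul_one]

lemma αmat_η_eq_D (t : ℕ) : S.αmat t * S.ηmat = !![(S.ϖ^t)⁻¹, 0; 0, S.ϖ^t * S.ϖ] := by
  rw [αmat, ηmat, Matrix.mul_fin_two, eq2]
  refine ⟨by ring, by ring, by ring, by ring⟩


end Setting

/-- With `α^t = diag(ϖ^{−t}, ϖ^t)` and `K^η = ηKη⁻¹`, the family
`{α^t : t ∈ ℤ_{≥0}}` is a complete and irredundant set of double coset representatives for
`K\G/K`, `K\G/K^η` and `K^η\G/K^η`: in each case `G` is the union of the corresponding
double cosets of the `α^t`, `t ≥ 0`, and these double cosets are pairwise disjoint. -/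
theorem statement4 {E : Type*} [Field E] (S : Setting E) :
    let Kη : Set (Matrix (Fin 2) (Fin 2) E) := (fun k => S.ηmat * k * S.ηinv) '' S.Kset
    -- K\G/K
    ((S.Gset = ⋃ t : ℕ, S.Kset * {S.αmat t} * S.Kset) ∧
      (∀ s t : ℕ, s ≠ t →
        Disjoint (S.Kset * {S.αmat s} * S.Kset) (S.Kset * {S.αmat t} * S.Kset))) ∧
    -- K\G/K^η
    ((S.Gset = ⋃ t : ℕ, S.Kset * {S.αmat t} * Kη) ∧
      (∀ s t : ℕ, s ≠ t →
        Disjoint (S.Kset * {S.αmat s} * Kη) (S.Kset * {S.αmat t} * Kη))) ∧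
    -- K^η\G/K^η
    ((S.Gset = ⋃ t : ℕ, Kη * {S.αmat t} * Kη) ∧
      (∀ s t : ℕ, s ≠ t →
        Disjoint (Kη * {S.αmat s} * Kη) (Kη * {S.αmat t} * Kη))) := by
  intro Kη
  have cancel : ∀ X : Matrix (Fin 2) (Fin 2) E, X * S.ηmat * S.ηinv = X :=
    fun X => by rw [mul_assoc, S.η_ηinv, mul_one]
  -- Part 1
  have part1eq : S.Gset = ⋃ t : ℕ, S.Kset * {S.αmat t} * S.Kset := by
    ext g
    constructor
    · intro hg
      have hrel : (S.mbar g)ᵀ * S.wmat * g = (1:E) • S.wmat := by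
        rw [one_smul]; exact hg
      obtain ⟨t, k1, hk1, k2, hk2, heq⟩ := S.master 1 one_ne_zero (_root_.map_one _)
        (by rw [S.ν_one]; omega) g hrel
      rw [Set.mem_iUnion]
      refine ⟨t, Setting.mem_coset.mpr ⟨k1, hk1, k2, hk2, ?_⟩⟩
      rw [S.αmat_eq_D t, heq]
    · intro hg
      rw [Set.mem_iUnion] at hg
      obtain ⟨t, hmem⟩ := hg
      obtain ⟨k1, hk1, k2, hk2, rfl⟩ := Setting.mem_coset.mp hmem
      exact S.inG_mul (S.inG_mul hk1.1 (S.inG_α t)) hk2.1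
  have part1disj : ∀ s t : ℕ, s ≠ t →
      Disjoint (S.Kset * {S.αmat s} * S.Kset) (S.Kset * {S.αmat t} * S.Kset) := by
    have key : ∀ s t : ℕ, s < t → ∀ x, x ∈ S.Kset * {S.αmat s} * S.Kset →
        x ∈ S.Kset * {S.αmat t} * S.Kset → False := by
      intro s t hst x hxs hxt
      obtain ⟨k1, hk1, k2, hk2, he1⟩ := Setting.mem_coset.mp hxs
      obtain ⟨k3, hk3, k4, hk4, he2⟩ := Setting.mem_coset.mp hxt
      refine S.disj_core 1 (by rw [S.ν_one]) hst hk1 hk2 hk3 hk4 ?_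
      rw [← S.αmat_eq_D s, ← S.αmat_eq_D t, he1, he2]
    intro s t hst
    rw [Set.disjoint_left]
    intro x hxs hxt
    rcases hst.lt_or_gt with h | h
    · exact key s t h x hxs hxt
    · exact key t s h x hxt hxs
  -- Part 2
  have part2eq : S.Gset = ⋃ t : ℕ, S.Kset * {S.αmat t} * Kη := by
    ext g
    constructor
    · intro hg
      obtain ⟨t, k1, hk1, k2, hk2, heq⟩ := S.master S.ϖ S.ϖ_ne_zero S.ϖ_fixed
        (le_of_eq S.ν_ϖ) (g * S.ηmat) (S.relη hg)
      rw [Set.mem_iUnion]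
      refine ⟨t, Setting.mem_coset.mpr
        ⟨k1, hk1, S.ηmat * k2 * S.ηinv, ⟨k2, hk2, rfl⟩, ?_⟩⟩
      calc k1 * S.αmat t * (S.ηmat * k2 * S.ηinv)
          = (k1 * S.αmat t * (S.ηmat * k2 * S.ηinv) * S.ηmat) * S.ηinv := (cancel _).symm
        _ = (k1 * (S.αmat t * S.ηmat) * k2) * S.ηinv := by rw [S.coset2_eq]
        _ = (g * S.ηmat) * S.ηinv := by rw [S.αmat_η_eq_D, ← heq]
        _ = g := cancel _
    · intro hg
      rw [Set.mem_iUnion] at hg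
      obtain ⟨t, hmem⟩ := hg
      obtain ⟨k1, hk1, z, hz, rfl⟩ := Setting.mem_coset.mp hmem
      obtain ⟨k2, hk2, rfl⟩ := hz
      exact S.inG_mul (S.inG_mul hk1.1 (S.inG_α t)) (S.inG_conj_η hk2.1)
  have part2disj : ∀ s t : ℕ, s ≠ t →
      Disjoint (S.Kset * {S.αmat s} * Kη) (S.Kset * {S.αmat t} * Kη) := by
    have key : ∀ s t : ℕ, s < t → ∀ x, x ∈ S.Kset * {S.αmat s} * Kη →
        x ∈ S.Kset * {S.αmat t} * Kη → False := by
      intro s t hst x hxs hxt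
      obtain ⟨k1, hk1, z1, hz1, he1⟩ := Setting.mem_coset.mp hxs
      obtain ⟨k2, hk2, rfl⟩ := hz1
      obtain ⟨k3, hk3, z2, hz2, he2⟩ := Setting.mem_coset.mp hxt
      obtain ⟨k4, hk4, rfl⟩ := hz2
      refine S.disj_core S.ϖ (by rw [S.ν_ϖ]; omega) hst hk1 hk2 hk3 hk4 ?_
      rw [← S.αmat_η_eq_D s, ← S.αmat_η_eq_D t, ← S.coset2_eq k1 k2 s,
        ← S.coset2_eq k3 k4 t, he1, he2]
    intro s t hst
    rw [Set.disjoint_left]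
    intro x hxs hxt
    rcases hst.lt_or_gt with h | h
    · exact key s t h x hxs hxt
    · exact key t s h x hxt hxs
  -- Part 3
  have part3eq : S.Gset = ⋃ t : ℕ, Kη * {S.αmat t} * Kη := by
    ext g
    constructor
    · intro hg
      have hg2 : S.inG (S.ηinv * g * S.ηmat) := S.inG_conj_ηinv hg
      have hrel : (S.mbar (S.ηinv * g * S.ηmat))ᵀ * S.wmat * (S.ηinv * g * S.ηmat)
          = (1:E) • S.wmat := by rw [one_smul]; exact hg2
      obtain ⟨t, k1, hk1, k2, hk2, heq⟩ := S.master 1 one_ne_zero (_root_.map_one _)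
        (by rw [S.ν_one]; omega) _ hrel
      rw [Set.mem_iUnion]
      refine ⟨t, Setting.mem_coset.mpr
        ⟨S.ηmat * k1 * S.ηinv, ⟨k1, hk1, rfl⟩, S.ηmat * k2 * S.ηinv, ⟨k2, hk2, rfl⟩, ?_⟩⟩
      rw [S.conj_coset_eq', S.αmat_eq_D t, ← heq]
      rw [show S.ηmat * (S.ηinv * g * S.ηmat) * S.ηinv
          = (S.ηmat * S.ηinv) * g * (S.ηmat * S.ηinv) by simp only [mul_assoc],
        S.η_ηinv, one_mul, mul_one]
    · intro hg
      rw [Set.mem_iUnion] at hg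
      obtain ⟨t, hmem⟩ := hg
      obtain ⟨z1, hz1, z2, hz2, rfl⟩ := Setting.mem_coset.mp hmem
      obtain ⟨k1, hk1, rfl⟩ := hz1
      obtain ⟨k2, hk2, rfl⟩ := hz2
      exact S.inG_mul (S.inG_mul (S.inG_conj_η hk1.1) (S.inG_α t)) (S.inG_conj_η hk2.1)
  have part3disj : ∀ s t : ℕ, s ≠ t →
      Disjoint (Kη * {S.αmat s} * Kη) (Kη * {S.αmat t} * Kη) := by
    have key : ∀ s t : ℕ, s < t → ∀ x, x ∈ Kη * {S.αmat s} * Kη →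
        x ∈ Kη * {S.αmat t} * Kη → False := by
      intro s t hst x hxs hxt
      obtain ⟨z1, hz1, z2, hz2, he1⟩ := Setting.mem_coset.mp hxs
      obtain ⟨k1, hk1, rfl⟩ := hz1
      obtain ⟨k2, hk2, rfl⟩ := hz2
      obtain ⟨z3, hz3, z4, hz4, he2⟩ := Setting.mem_coset.mp hxt
      obtain ⟨k3, hk3, rfl⟩ := hz3
      obtain ⟨k4, hk4, rfl⟩ := hz4
      refine S.disj_core 1 (by rw [S.ν_one]) hst hk1 hk2 hk3 hk4 ?_
      rw [← S.αmat_eq_D s, ← S.αmat_eq_D t, ← S.conj_coset_eq k1 k2 s,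
        ← S.conj_coset_eq k3 k4 t, he1, he2]
    intro s t hst
    rw [Set.disjoint_left]
    intro x hxs hxt
    rcases hst.lt_or_gt with h | h
    · exact key s t h x hxs hxt
    · exact key t s h x hxt hxs
  exact ⟨⟨part1eq, part1disj⟩, ⟨part2eq, part2disj⟩, ⟨part3eq, part3disj⟩⟩
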